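/- The Schreier family (S₁, d_Δ) embeds isometrically into C([0, ω^ω]): there exists a map φ : S₁ → C([0, ω^ω]) with ‖φ(σ) − φ(τ)‖_∞ = d_Δ(σ,τ) for all σ, τ ∈ S₁. -/

import Mathlib

open Ordinal Set

/-- Code of a "tail list" at a given capacity, without the final term. -/
noncomputable def pcode : ℕ → List ℕ → Ordinal
  | _, [] => 0
  | c+1, a :: l => ω ^ (c : Ordinal) * (a : Ordinal) + pcode c l
  | 0, _ :: _ => 0

/-- Full code: `pcode` plus a final term `ω ^ (capacity - length)`. -/
noncomputable def tcode (c : ℕ) (l : List ℕ) : Ordinal :=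
  pcode c l + ω ^ ((c - l.length : ℕ) : Ordinal)

lemma pcode_nil (c : ℕ) : pcode c [] = 0 := by cases c <;> rfl

lemma tcode_cons (c a : ℕ) (l : List ℕ) :
    tcode (c+1) (a :: l) = ω ^ (c : Ordinal) * (a : Ordinal) + tcode c l := by
  simp [tcode, pcode, Nat.succ_sub_succ, add_assoc]

lemma tcode_pos (c : ℕ) (l : List ℕ) : 0 < tcode c l := by
  rw [tcode]
  exact lt_of_lt_of_le (opow_pos _ omega0_pos) le_add_self

lemma tcode_le : ∀ (l : List ℕ) (c : ℕ), l.length ≤ c → tcode c l ≤ ω ^ (c : Ordinal) := by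
  intro l
  induction l with
  | nil => intro c _; simp [tcode, pcode_nil]
  | cons a l ih =>
    intro c hc
    cases c with
    | zero => simp at hc
    | succ c =>
      have hl : l.length ≤ c := by simpa using hc
      rw [tcode_cons]
      calc ω ^ (c : Ordinal) * (a : Ordinal) + tcode c l
          ≤ ω ^ (c : Ordinal) * (a : Ordinal) + ω ^ (c : Ordinal) :=
            add_le_add_right (ih c hl) _
        _ = ω ^ (c : Ordinal) * ((a : Ordinal) + 1) := by rw [mul_add_one]
        _ ≤ ω ^ (c : Ordinal) * ω := by
            refine mul_le_mul_right ?_ _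
            exact_mod_cast (Ordinal.nat_lt_omega0 (a+1)).le
        _ = ω ^ ((c + 1 : ℕ) : Ordinal) := by
            rw [Nat.cast_add, Nat.cast_one, Ordinal.add_one_eq_succ, Ordinal.opow_succ]

lemma tcode_lt (c a : ℕ) (l : List ℕ) (h : l.length ≤ c) :
    tcode (c+1) (a :: l) < ω ^ ((c + 1 : ℕ) : Ordinal) := by
  rw [tcode_cons]
  calc ω ^ (c : Ordinal) * (a : Ordinal) + tcode c l
      ≤ ω ^ (c : Ordinal) * (a : Ordinal) + ω ^ (c : Ordinal) := add_le_add_right (tcode_le l c h) _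
    _ = ω ^ (c : Ordinal) * ((a : Ordinal) + 1) := by rw [mul_add_one]
    _ < ω ^ (c : Ordinal) * ω := by
        refine (mul_lt_mul_iff_of_pos_left (opow_pos _ omega0_pos)).mpr ?_
        exact_mod_cast Ordinal.nat_lt_omega0 (a+1)
    _ = ω ^ ((c + 1 : ℕ) : Ordinal) := by
        rw [Nat.cast_add, Nat.cast_one, Ordinal.add_one_eq_succ, Ordinal.opow_succ]

/-- Blocks `(e*a, e*a + e]` for distinct `a` are disjoint. -/
lemma block_eq {e x : Ordinal} {a b : ℕ}
    (ha : x ∈ Set.Ioc (e * (a : Ordinal)) (e * (a : Ordinal) + e))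
    (hb : x ∈ Set.Ioc (e * (b : Ordinal)) (e * (b : Ordinal) + e)) : a = b := by
  by_contra hne
  rcases Nat.lt_or_ge a b with h | h
  · have h1 : e * (a : Ordinal) + e ≤ e * (b : Ordinal) := by
      rw [← mul_add_one]
      refine mul_le_mul_right ?_ _
      exact_mod_cast h
    exact absurd (lt_of_le_of_lt (ha.2.trans h1) hb.1) (lt_irrefl x)
  · have h : b < a := lt_of_le_of_ne h (Ne.symm hne)
    have h1 : e * (b : Ordinal) + e ≤ e * (a : Ordinal) := by
      rw [← mul_add_one]
      refine mul_le_mul_right ?_ _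
      exact_mod_cast h
    exact absurd (lt_of_le_of_lt (hb.2.trans h1) ha.1) (lt_irrefl x)

/-- Main disjointness/prefix lemma: if the full code of `t` lies in the
interval addressed by `s`, then `s` is a prefix of `t`. -/
lemma main_prefix : ∀ (s : List ℕ) (c : ℕ) (t : List ℕ), s.length ≤ c → t.length ≤ c →
    tcode c t ∈ Set.Ioc (pcode c s) (tcode c s) → s <+: t := by
  intro s
  induction s with
  | nil => exact fun _ t _ _ _ => List.nil_prefix
  | cons a s' ih =>
    intro c t hs ht hmem
    cases c with
    | zero => simp at hs
    | succ c =>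
      have hs' : s'.length ≤ c := by simpa using hs
      obtain ⟨h1, h2⟩ := hmem
      rw [tcode_cons] at h2
      have hps : pcode (c+1) (a :: s') = ω ^ (c : Ordinal) * (a : Ordinal) + pcode c s' := rfl
      rw [hps] at h1
      cases t with
      | nil =>
        exfalso
        have htop : tcode (c+1) ([] : List ℕ) = ω ^ ((c+1 : ℕ) : Ordinal) := by
          simp [tcode, pcode_nil]
        have hlt : tcode (c+1) (a :: s') < ω ^ ((c+1 : ℕ) : Ordinal) := tcode_lt c a s' hs'
        rw [tcode_cons] at hlt
        rw [htop] at h2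
        exact absurd (lt_of_le_of_lt h2 hlt) (lt_irrefl _)
      | cons b t' =>
        have ht' : t'.length ≤ c := by simpa using ht
        rw [tcode_cons] at h1 h2
        -- x = ω^c * b + tcode c t'
        have hxa : ω ^ (c : Ordinal) * (b : Ordinal) + tcode c t' ∈
            Set.Ioc (ω ^ (c : Ordinal) * (a : Ordinal)) (ω ^ (c : Ordinal) * (a : Ordinal) + ω ^ (c : Ordinal)) := by
          constructor
          · exact lt_of_le_of_lt le_self_add h1
          · exact h2.trans (add_le_add_right (tcode_le s' c hs') _)
        have hxb : ω ^ (c : Ordinal) * (b : Ordinal) + tcode c t' ∈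
            Set.Ioc (ω ^ (c : Ordinal) * (b : Ordinal)) (ω ^ (c : Ordinal) * (b : Ordinal) + ω ^ (c : Ordinal)) := by
          constructor
          · have := (add_lt_add_iff_left (ω ^ (c : Ordinal) * (b : Ordinal))).mpr (tcode_pos c t')
            simpa using this
          · exact add_le_add_right (tcode_le t' c ht') _
        have hab : a = b := block_eq hxa hxb
        subst hab
        have h1' : pcode c s' < tcode c t' := (add_lt_add_iff_left _).mp h1
        have h2' : tcode c t' ≤ tcode c s' := (add_le_add_iff_left _).mp h2
        obtain ⟨u, hu⟩ := ih c t' hs' ht' ⟨h1', h2'⟩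
        exact ⟨u, by rw [← hu]; rfl⟩

/-- Ordinal code of (the sorted list of) a Schreier set. -/
noncomputable def lcode : List ℕ → Ordinal
  | [] => ω ^ ω
  | m :: tl => ω ^ ((m + 1 : ℕ) : Ordinal) + tcode m tl

/-- Interval associated to a (sorted) truncation list. -/
noncomputable def iv : List ℕ → Set Ordinal
  | [] => ∅
  | m :: tl => Set.Ioc (ω ^ ((m + 1 : ℕ) : Ordinal) + pcode m tl)
      (ω ^ ((m + 1 : ℕ) : Ordinal) + tcode m tl)

/-- Index set for the intervals making up `Kset n`. -/
noncomputable def Qn (n : ℕ) : Finset (Finset ℕ) :=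
  (Finset.range (n+1)).powerset.filter (fun C => n ∈ C ∧ ∀ a ∈ C, C.card ≤ a)

noncomputable def Kset (n : ℕ) : Set Ordinal := ⋃ C ∈ Qn n, iv (C.sort (· ≤ ·))

noncomputable def xB (B : Finset ℕ) : Ordinal := lcode (B.sort (· ≤ ·))

lemma blocktop_lt (m k : ℕ) (h : m + 2 ≤ k) :
    ω ^ ((m + 1 : ℕ) : Ordinal) + ω ^ (m : Ordinal) < ω ^ ((k : ℕ) : Ordinal) := by
  have h1 : ω ^ ((m + 1 : ℕ) : Ordinal) < ω ^ ((k : ℕ) : Ordinal) := by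
    refine (Ordinal.opow_lt_opow_iff_right Ordinal.one_lt_omega0).mpr ?_
    exact_mod_cast (by omega : m + 1 < k)
  have h2 : ω ^ ((m : ℕ) : Ordinal) < ω ^ ((k : ℕ) : Ordinal) := by
    refine (Ordinal.opow_lt_opow_iff_right Ordinal.one_lt_omega0).mpr ?_
    exact_mod_cast (by omega : m < k)
  exact Ordinal.principal_add_omega0_opow _ h1 h2

lemma blocktop_lt_omega (m : ℕ) :
    ω ^ ((m + 1 : ℕ) : Ordinal) + ω ^ (m : Ordinal) < ω ^ ω := by
  have h1 : ω ^ ((m + 1 : ℕ) : Ordinal) < ω ^ ω := by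
    refine (Ordinal.opow_lt_opow_iff_right Ordinal.one_lt_omega0).mpr ?_
    exact Ordinal.nat_lt_omega0 _
  have h2 : ω ^ ((m : ℕ) : Ordinal) < ω ^ ω := by
    refine (Ordinal.opow_lt_opow_iff_right Ordinal.one_lt_omega0).mpr ?_
    exact Ordinal.nat_lt_omega0 _
  exact Ordinal.principal_add_omega0_opow _ h1 h2

lemma iv_subset_block (m : ℕ) (tl : List ℕ) (h : tl.length ≤ m) :
    iv (m :: tl) ⊆ Set.Ioc (ω ^ ((m + 1 : ℕ) : Ordinal))
      (ω ^ ((m + 1 : ℕ) : Ordinal) + ω ^ (m : Ordinal)) := by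
  intro x hx
  obtain ⟨h1, h2⟩ := hx
  exact ⟨lt_of_le_of_lt le_self_add h1,
    h2.trans (add_le_add_right (tcode_le tl m h) _)⟩

lemma lcode_mem_iv (m : ℕ) (tl : List ℕ) :
    lcode (m :: tl) ∈ iv (m :: tl) := by
  constructor
  · have := (add_lt_add_iff_left (ω ^ ((m + 1 : ℕ) : Ordinal) + pcode m tl)).mpr
      (opow_pos ((m - tl.length : ℕ) : Ordinal) omega0_pos)
    simp only [add_zero] at this
    calc ω ^ ((m + 1 : ℕ) : Ordinal) + pcode m tl
        < ω ^ ((m + 1 : ℕ) : Ordinal) + pcode m tl + ω ^ ((m - tl.length : ℕ) : Ordinal) := this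
      _ = lcode (m :: tl) := by rw [add_assoc]; rfl
  · show lcode (m :: tl) ≤ ω ^ ((m + 1 : ℕ) : Ordinal) + tcode m tl
    exact le_of_eq rfl

lemma pcode_zero' (l : List ℕ) : pcode 0 l = 0 := by cases l <;> rfl

lemma pcode_cons (c a : ℕ) (l : List ℕ) :
    pcode (c+1) (a :: l) = ω ^ (c : Ordinal) * (a : Ordinal) + pcode c l := rfl

lemma pcode_append : ∀ (u : List ℕ) (c : ℕ) (v : List ℕ),
    pcode c (u ++ v) = pcode c u + pcode (c - u.length) v := by
  intro u
  induction u with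
  | nil => intro c v; simp [pcode_nil]
  | cons a u ih =>
    intro c v
    cases c with
    | zero =>
      simp [pcode_zero', Nat.zero_sub]
    | succ c =>
      simp only [List.cons_append, pcode_cons, ih, List.length_cons, Nat.succ_sub_succ, add_assoc]

lemma tcode_append_mem (c : ℕ) (u v : List ℕ) (hv : v.length ≤ c - u.length) :
    tcode c (u ++ v) ∈ Set.Ioc (pcode c u) (tcode c u) := by
  have hdec : tcode c (u ++ v) = pcode c u + tcode (c - u.length) v := by
    simp only [tcode, pcode_append, List.length_append, add_assoc, Nat.sub_sub]
  constructor
  · rw [hdec]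
    have := (add_lt_add_iff_left (pcode c u)).mpr (tcode_pos (c - u.length) v)
    simpa using this
  · rw [hdec]
    exact add_le_add_right (tcode_le v _ hv) _

/-- Splitting the sorted list of a finset at a threshold. -/
lemma sort_split (B : Finset ℕ) (n : ℕ) :
    (B.filter (fun a => a ≤ n)).sort (· ≤ ·) ++ (B.filter (fun a => ¬ a ≤ n)).sort (· ≤ ·)
      = B.sort (· ≤ ·) := by
  refine (fun hp h1 => List.Perm.eq_of_pairwise' h1 (Finset.pairwise_sort _ _) hp) ?_ ?_
  · rw [← Multiset.coe_eq_coe, ← Multiset.coe_add,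
      Finset.sort_eq, Finset.sort_eq, Finset.sort_eq, Finset.filter_val, Finset.filter_val]
    exact Multiset.filter_add_not _ _
  · refine List.pairwise_append.mpr ⟨Finset.pairwise_sort _ _, Finset.pairwise_sort _ _, ?_⟩
    intro a ha b hb
    have ha' : a ≤ n := (Finset.mem_filter.mp ((Finset.mem_sort _).mp ha)).2
    have hb' : ¬ b ≤ n := (Finset.mem_filter.mp ((Finset.mem_sort _).mp hb)).2
    omega

lemma xB_mem_Kset {B : Finset ℕ} (hB : ∀ k ∈ B, B.card ≤ k) {n : ℕ} (hn : n ∈ B) :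
    xB B ∈ Kset n := by
  classical
  set C := B.filter (fun a => a ≤ n) with hC
  have hnC : n ∈ C := Finset.mem_filter.mpr ⟨hn, le_rfl⟩
  have hCB : C ⊆ B := Finset.filter_subset _ _
  have hCQ : C ∈ Qn n := by
    rw [Qn, Finset.mem_filter, Finset.mem_powerset]
    refine ⟨?_, hnC, ?_⟩
    · intro a ha
      have := (Finset.mem_filter.mp ha).2
      exact Finset.mem_range.mpr (by omega)
    · intro a ha
      exact le_trans (Finset.card_le_card hCB) (hB a (hCB ha))
  -- sorted list decomposition
  have hsplit := sort_split B n
  rw [← hC] at hsplit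
  have hCne : C.sort (· ≤ ·) ≠ [] := by
    intro h
    have := (Finset.mem_sort (α := ℕ) (· ≤ ·)).mpr hnC
    rw [h] at this
    exact absurd this List.not_mem_nil
  obtain ⟨mc, tc, hsc⟩ := List.exists_cons_of_ne_nil hCne
  set r := (B.filter (fun a => ¬ a ≤ n)).sort (· ≤ ·) with hr
  have hsb : B.sort (· ≤ ·) = mc :: (tc ++ r) := by
    rw [← hsplit, hsc]; rfl
  -- cardinalities
  have hmcB : mc ∈ B := by
    have : mc ∈ B.sort (· ≤ ·) := by rw [hsb]; exact List.mem_cons_self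
    exact (Finset.mem_sort _).mp this
  have hcardB : B.card ≤ mc := hB mc hmcB
  have hlenB : (B.sort (· ≤ ·)).length = B.card := Finset.length_sort _
  have hlen : tc.length + r.length + 1 = B.card := by
    rw [← hlenB, hsb]
    simp [List.length_append]
  have hvlen : r.length ≤ mc - tc.length := by omega
  -- membership
  refine Set.mem_biUnion hCQ ?_
  rw [hsc]
  show xB B ∈ iv (mc :: tc)
  have : xB B = ω ^ ((mc + 1 : ℕ) : Ordinal) + tcode mc (tc ++ r) := by
    rw [xB, hsb]; rfl
  rw [this]
  obtain ⟨h1, h2⟩ := tcode_append_mem mc tc r hvlen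
  exact ⟨(add_lt_add_iff_left _).mpr h1, add_le_add_right h2 _⟩

lemma mem_of_xB_mem_Kset {B : Finset ℕ} (hB : ∀ k ∈ B, B.card ≤ k) {n : ℕ}
    (h : xB B ∈ Kset n) : n ∈ B := by
  classical
  rw [Kset, Set.mem_iUnion₂] at h
  obtain ⟨C, hCQ, hx⟩ := h
  rw [Qn, Finset.mem_filter, Finset.mem_powerset] at hCQ
  obtain ⟨hCsub, hnC, hCsch⟩ := hCQ
  have hCne : C.sort (· ≤ ·) ≠ [] := by
    intro h
    have := (Finset.mem_sort (α := ℕ) (· ≤ ·)).mpr hnC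
    rw [h] at this
    exact absurd this List.not_mem_nil
  obtain ⟨mc, tc, hsc⟩ := List.exists_cons_of_ne_nil hCne
  rw [hsc] at hx
  have hmcC : mc ∈ C := by
    have : mc ∈ C.sort (· ≤ ·) := by rw [hsc]; exact List.mem_cons_self
    exact (Finset.mem_sort _).mp this
  have hlenC : tc.length + 1 = C.card := by
    have := Finset.length_sort (α := ℕ) (· ≤ ·) (s := C)
    rw [hsc] at this
    simpa using this
  have htcmc : tc.length ≤ mc := by
    have := hCsch mc hmcC
    omega
  -- B must be nonempty
  cases hsbcase : B.sort (· ≤ ·) with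
  | nil =>
    exfalso
    have hxB : xB B = ω ^ ω := by rw [xB, hsbcase]; rfl
    have hub : xB B ≤ ω ^ ((mc + 1 : ℕ) : Ordinal) + ω ^ (mc : Ordinal) :=
      (iv_subset_block mc tc htcmc hx).2
    rw [hxB] at hub
    exact absurd (lt_of_le_of_lt hub (blocktop_lt_omega mc)) (lt_irrefl _)
  | cons mb tb =>
    have hmbB : mb ∈ B := by
      have : mb ∈ B.sort (· ≤ ·) := by rw [hsbcase]; exact List.mem_cons_self
      exact (Finset.mem_sort _).mp this
    have hlenBcard : tb.length + 1 = B.card := by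
      have := Finset.length_sort (α := ℕ) (· ≤ ·) (s := B)
      rw [hsbcase] at this
      simpa using this
    have htbmb : tb.length ≤ mb := by
      have := hB mb hmbB
      omega
    have hxB : xB B = ω ^ ((mb + 1 : ℕ) : Ordinal) + tcode mb tb := by
      rw [xB, hsbcase]; rfl
    -- top level block equality
    have hmemb : xB B ∈ Set.Ioc (ω ^ ((mb + 1 : ℕ) : Ordinal))
        (ω ^ ((mb + 1 : ℕ) : Ordinal) + ω ^ (mb : Ordinal)) := by
      rw [hxB]
      constructor
      · have := (add_lt_add_iff_left (ω ^ ((mb + 1 : ℕ) : Ordinal))).mpr (tcode_pos mb tb)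
        simpa using this
      · exact add_le_add_right (tcode_le tb mb htbmb) _
    have hmemc : xB B ∈ Set.Ioc (ω ^ ((mc + 1 : ℕ) : Ordinal))
        (ω ^ ((mc + 1 : ℕ) : Ordinal) + ω ^ (mc : Ordinal)) := iv_subset_block mc tc htcmc hx
    have hmbmc : mb = mc := by
      by_contra hne
      rcases Nat.lt_or_ge mb mc with hlt | hge
      · have : ω ^ ((mb + 1 : ℕ) : Ordinal) + ω ^ (mb : Ordinal) < ω ^ ((mc + 1 : ℕ) : Ordinal) :=
          blocktop_lt mb (mc + 1) (by omega)
        exact absurd (hmemb.2.trans_lt (this.trans_le hmemc.1.le)) (lt_irrefl _)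
      · have hlt : mc < mb := by omega
        have : ω ^ ((mc + 1 : ℕ) : Ordinal) + ω ^ (mc : Ordinal) < ω ^ ((mb + 1 : ℕ) : Ordinal) :=
          blocktop_lt mc (mb + 1) (by omega)
        exact absurd (hmemc.2.trans_lt (this.trans_le hmemb.1.le)) (lt_irrefl _)
    subst hmbmc
    -- cancel the leading term
    rw [hxB] at hx
    obtain ⟨h1, h2⟩ := hx
    have h1' : pcode mb tc < tcode mb tb := (add_lt_add_iff_left _).mp h1
    have h2' : tcode mb tb ≤ tcode mb tc := (add_le_add_iff_left _).mp h2
    have hpre : tc <+: tb := main_prefix tc mb tb htcmc htbmb ⟨h1', h2'⟩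
    -- conclude n ∈ B
    have hnsc : n ∈ mb :: tc := by
      have : n ∈ C.sort (· ≤ ·) := (Finset.mem_sort _).mpr hnC
      rw [hsc] at this
      exact this
    rcases List.mem_cons.mp hnsc with heq | htcmem
    · rw [heq]; exact hmbB
    · have : n ∈ tb := hpre.sublist.mem htcmem
      have : n ∈ B.sort (· ≤ ·) := by rw [hsbcase]; exact List.mem_cons_of_mem _ this
      exact (Finset.mem_sort _).mp this

lemma xB_le {B : Finset ℕ} (hB : ∀ k ∈ B, B.card ≤ k) : xB B ≤ ω ^ ω := by
  cases hsb : B.sort (· ≤ ·) with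
  | nil => rw [xB, hsb]; exact le_of_eq rfl
  | cons m tl =>
    have hmB : m ∈ B := by
      have : m ∈ B.sort (· ≤ ·) := by rw [hsb]; exact List.mem_cons_self
      exact (Finset.mem_sort _).mp this
    have hlen : tl.length + 1 = B.card := by
      have := Finset.length_sort (α := ℕ) (· ≤ ·) (s := B)
      rw [hsb] at this
      simpa using this
    have htl : tl.length ≤ m := by have := hB m hmB; omega
    have : xB B = ω ^ ((m + 1 : ℕ) : Ordinal) + tcode m tl := by rw [xB, hsb]; rfl
    rw [this]
    exact le_of_lt (lt_of_le_of_lt (add_le_add_right (tcode_le tl m htl) _) (blocktop_lt_omega m))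

lemma isClopen_Ioc_ordinal (a b : Ordinal) : IsClopen (Set.Ioc a b) := by
  constructor
  · have : Set.Ioc a b = Set.Icc (a + 1) b := by
      ext x
      simp [Set.mem_Ioc, Set.mem_Icc, Order.add_one_le_iff]
    rw [this]
    exact isClosed_Icc
  · have : Set.Ioc a b = Set.Ioo a (b + 1) := by
      ext x
      simp [Set.mem_Ioc, Set.mem_Ioo, Order.lt_add_one_iff]
    rw [this]
    exact isOpen_Ioo

lemma isClopen_iv (l : List ℕ) : IsClopen (iv l) := by
  cases l with
  | nil => exact isClopen_empty
  | cons m tl => exact isClopen_Ioc_ordinal _ _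

lemma isClopen_Kset (n : ℕ) : IsClopen (Kset n) :=
  isClopen_biUnion_finset (fun C _ => isClopen_iv _)

noncomputable def efun (n : ℕ) : C(↥(Set.Iic (ω ^ ω)), ℝ) := by
  classical
  refine ⟨fun x => if (x : Ordinal) ∈ Kset n then (-1 : ℝ) else 1, ?_⟩
  have hc : IsClopen ((fun x : ↥(Set.Iic (ω ^ ω)) => (x : Ordinal)) ⁻¹' Kset n) :=
    (isClopen_Kset n).preimage continuous_subtype_val
  have hloc : IsLocallyConstant (fun x : ↥(Set.Iic (ω ^ ω)) =>
      if (x : Ordinal) ∈ Kset n then (-1 : ℝ) else 1) := by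
    intro s
    by_cases h1 : (-1 : ℝ) ∈ s <;> by_cases h2 : (1 : ℝ) ∈ s
    · convert isOpen_univ
      ext x
      by_cases hx : (x : Ordinal) ∈ Kset n <;> simp [hx, h1, h2]
    · convert hc.isOpen
      ext x
      by_cases hx : (x : Ordinal) ∈ Kset n <;> simp [hx, h1, h2]
    · convert hc.compl.isOpen
      ext x
      by_cases hx : (x : Ordinal) ∈ Kset n <;> simp [hx, h1, h2]
    · convert isOpen_empty
      ext x
      by_cases hx : (x : Ordinal) ∈ Kset n <;> simp [hx, h1, h2]
  exact hloc.continuous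

lemma efun_apply_mem {n : ℕ} {x : ↥(Set.Iic (ω ^ ω))} (h : (x : Ordinal) ∈ Kset n) :
    efun n x = -1 := by
  simp only [efun, ContinuousMap.coe_mk, if_pos h]

lemma efun_apply_not_mem {n : ℕ} {x : ↥(Set.Iic (ω ^ ω))} (h : (x : Ordinal) ∉ Kset n) :
    efun n x = 1 := by
  simp only [efun, ContinuousMap.coe_mk, if_neg h]

lemma abs_efun_le (n : ℕ) (x : ↥(Set.Iic (ω ^ ω))) : |efun n x| ≤ 1 := by
  by_cases h : (x : Ordinal) ∈ Kset n
  · rw [efun_apply_mem h]; simp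
  · rw [efun_apply_not_mem h]; simp

/-- The compact space `[0, α]` of ordinals `≤ α` with the order topology. -/
noncomputable instance (a : Ordinal) : CompactSpace (Set.Iic a) :=
  isCompact_iff_compactSpace.mp (by rw [← Set.Icc_bot]; exact isCompact_Icc)

/-- The Schreier family `S₁`: finite sets `A` of positive integers with `A = ∅` or
`|A| ≤ min A`; equivalently, `|A| ≤ n` for every `n ∈ A`. -/
def SchreierFamily : Type := {A : Finset ℕ // ∀ n ∈ A, A.card ≤ n}

/-- The Schreier family `(S₁, d_Δ)` embeds isometrically into `C([0, ω^ω])`. -/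
theorem schreier_isometric_C_omega_pow_omega :
    ∃ φ : SchreierFamily → C(↥(Set.Iic (Ordinal.omega0 ^ Ordinal.omega0)), ℝ),
      ∀ σ τ : SchreierFamily,
        ‖φ σ - φ τ‖ = ((symmDiff σ.1 τ.1).card : ℝ) := by
  classical
  refine ⟨fun σ => ∑ n ∈ σ.1, efun n, fun σ τ => ?_⟩
  set f := (∑ n ∈ σ.1, efun n) - (∑ n ∈ τ.1, efun n) with hf
  have hkey : ∀ x : ↥(Set.Iic (ω ^ ω)),
      f x = (∑ n ∈ σ.1 \ τ.1, efun n x) - (∑ n ∈ τ.1 \ σ.1, efun n x) := by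
    intro x
    have h1 : f x = (∑ n ∈ σ.1, efun n x) - (∑ n ∈ τ.1, efun n x) := by
      simp [hf]
    have h2 : ∑ n ∈ σ.1, efun n x
        = (∑ n ∈ σ.1 ∩ τ.1, efun n x) + ∑ n ∈ σ.1 \ τ.1, efun n x :=
      (Finset.sum_inter_add_sum_sdiff _ _ _).symm
    have h3 : ∑ n ∈ τ.1, efun n x
        = (∑ n ∈ σ.1 ∩ τ.1, efun n x) + ∑ n ∈ τ.1 \ σ.1, efun n x := by
      rw [Finset.inter_comm]
      exact (Finset.sum_inter_add_sum_sdiff _ _ _).symm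
    rw [h1, h2, h3]
    ring
  have hcard : ((symmDiff σ.1 τ.1).card : ℝ)
      = ((σ.1 \ τ.1).card : ℝ) + ((τ.1 \ σ.1).card : ℝ) := by
    have hdisj : Disjoint (σ.1 \ τ.1) (τ.1 \ σ.1) := disjoint_sdiff_sdiff
    have hsd : symmDiff σ.1 τ.1 = (σ.1 \ τ.1) ∪ (τ.1 \ σ.1) := by
      ext a
      simp [Finset.mem_symmDiff, Finset.mem_union, Finset.mem_sdiff]
    rw [hsd, Finset.card_union_of_disjoint hdisj]
    push_cast
    ring
  rw [hcard]
  apply le_antisymm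
  · refine (ContinuousMap.norm_le _ (by positivity)).mpr ?_
    intro x
    rw [Real.norm_eq_abs, hkey x]
    have b1 : |∑ n ∈ σ.1 \ τ.1, efun n x| ≤ ((σ.1 \ τ.1).card : ℝ) := by
      calc |∑ n ∈ σ.1 \ τ.1, efun n x| ≤ ∑ n ∈ σ.1 \ τ.1, |efun n x| :=
            Finset.abs_sum_le_sum_abs _ _
        _ ≤ ∑ _n ∈ σ.1 \ τ.1, (1 : ℝ) := Finset.sum_le_sum (fun n _ => abs_efun_le n x)
        _ = ((σ.1 \ τ.1).card : ℝ) := by simp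
    have b2 : |∑ n ∈ τ.1 \ σ.1, efun n x| ≤ ((τ.1 \ σ.1).card : ℝ) := by
      calc |∑ n ∈ τ.1 \ σ.1, efun n x| ≤ ∑ n ∈ τ.1 \ σ.1, |efun n x| :=
            Finset.abs_sum_le_sum_abs _ _
        _ ≤ ∑ _n ∈ τ.1 \ σ.1, (1 : ℝ) := Finset.sum_le_sum (fun n _ => abs_efun_le n x)
        _ = ((τ.1 \ σ.1).card : ℝ) := by simp
    calc |(∑ n ∈ σ.1 \ τ.1, efun n x) - ∑ n ∈ τ.1 \ σ.1, efun n x|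
        ≤ |∑ n ∈ σ.1 \ τ.1, efun n x| + |∑ n ∈ τ.1 \ σ.1, efun n x| := abs_sub _ _
      _ ≤ ((σ.1 \ τ.1).card : ℝ) + ((τ.1 \ σ.1).card : ℝ) := add_le_add b1 b2
  · have hBS : ∀ k ∈ τ.1 \ σ.1, (τ.1 \ σ.1).card ≤ k := fun k hk =>
      le_trans (Finset.card_le_card Finset.sdiff_subset) (τ.2 k (Finset.mem_sdiff.mp hk).1)
    set x₀ : ↥(Set.Iic (ω ^ ω)) := ⟨xB (τ.1 \ σ.1), xB_le hBS⟩ with hx₀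
    have hval : f x₀ = ((σ.1 \ τ.1).card : ℝ) + ((τ.1 \ σ.1).card : ℝ) := by
      rw [hkey]
      have hs1 : ∀ n ∈ σ.1 \ τ.1, efun n x₀ = 1 := by
        intro n hn
        apply efun_apply_not_mem
        intro hmem
        have hnB : n ∈ τ.1 \ σ.1 := mem_of_xB_mem_Kset hBS hmem
        obtain ⟨hn1, hn2⟩ := Finset.mem_sdiff.mp hn
        obtain ⟨hn3, hn4⟩ := Finset.mem_sdiff.mp hnB
        exact hn4 hn1
      have hs2 : ∀ n ∈ τ.1 \ σ.1, efun n x₀ = -1 := fun n hn =>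
        efun_apply_mem (xB_mem_Kset hBS hn)
      rw [Finset.sum_congr rfl hs1, Finset.sum_congr rfl hs2]
      simp
    have hnorm := ContinuousMap.norm_coe_le_norm f x₀
    rw [hval] at hnorm
    calc ((σ.1 \ τ.1).card : ℝ) + ((τ.1 \ σ.1).card : ℝ)
        ≤ |((σ.1 \ τ.1).card : ℝ) + ((τ.1 \ σ.1).card : ℝ)| := le_abs_self _
      _ ≤ ‖f‖ := by rw [← Real.norm_eq_abs] at *; exact hnorm
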